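/- Let $(E, \Sigma)$ be a measurable space and let $\mathcal{K}$ denote the space of bounded signed kernels $k: E_1 \times \Sigma_2 \to \mathbb{R}$ with norm $\|k\| = \sup_{x} |k|(x, E_2)$, where $|k|(x,\cdot)$ is the total variation. Let $p$ be a stochastic (probability) kernel from $S \times A$ to $S$, and let $\pi, \pi'$ be stochastic kernels from $S$ to $A$. Define $P_\pi(ds'|s) = \int_A p(ds'|s,a)\,\pi(da|s)$ and the discounted occupancy kernel $d^{\pi} = (1-\beta)\sum_{k=0}^\infty \beta^k P_\pi^k$ for $\beta \in (0,1)$. Then $\|d^{\pi'} - d^{\pi}\| \le \frac{\beta}{1-\beta}\, \|\pi' - \pi\|$. -/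

import Mathlib

open MeasureTheory ProbabilityTheory

/-- Total-variation style distance: `sup` over measurable sets of the difference
of measures. -/
noncomputable def dTV {S : Type*} [MeasurableSpace S] (μ ν : Measure S) : ℝ :=
  ⨆ A : {A : Set S // MeasurableSet A}, |(μ A).toReal - (ν A).toReal|

/-- `k`-fold iterate of a measure-valued transition map, starting from Dirac. -/
noncomputable def iterK {S : Type*} [MeasurableSpace S]
    (P : S → Measure S) : ℕ → S → Measure S
  | 0 => fun s => Measure.dirac s
  | (n + 1) => fun s => (iterK P n s).bind P

/-- Discounted occupancy measure `d^π(s) = (1-β) ∑_k β^k P_π^k(s)`. -/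
noncomputable def occ {S : Type*} [MeasurableSpace S]
    (β : ℝ) (P : S → Measure S) (s : S) : Measure S :=
  ENNReal.ofReal (1 - β) •
    Measure.sum (fun k : ℕ => ENNReal.ofReal (β ^ k) • iterK P k s)

section Aux

open scoped ENNReal

variable {S X : Type*} [MeasurableSpace S] [MeasurableSpace X]

lemma dTV_bddAbove (μ ν : Measure S) [IsProbabilityMeasure μ] [IsProbabilityMeasure ν] :
    BddAbove (Set.range fun B : {B : Set S // MeasurableSet B} =>
      |(μ B).toReal - (ν B).toReal|) := by
  refine ⟨1, ?_⟩
  rintro x ⟨B, rfl⟩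
  have h1 : (μ (B : Set S)).toReal ≤ 1 := by
    simpa using ENNReal.toReal_mono ENNReal.one_ne_top (prob_le_one (μ := μ) (s := B))
  have h2 : (ν (B : Set S)).toReal ≤ 1 := by
    simpa using ENNReal.toReal_mono ENNReal.one_ne_top (prob_le_one (μ := ν) (s := B))
  have h3 : (0 : ℝ) ≤ (μ (B : Set S)).toReal := ENNReal.toReal_nonneg
  have h4 : (0 : ℝ) ≤ (ν (B : Set S)).toReal := ENNReal.toReal_nonneg
  exact abs_le.mpr ⟨by linarith, by linarith⟩

lemma abs_le_dTV (μ ν : Measure S) [IsProbabilityMeasure μ] [IsProbabilityMeasure ν]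
    {B : Set S} (hB : MeasurableSet B) :
    |(μ B).toReal - (ν B).toReal| ≤ dTV μ ν :=
  le_ciSup (dTV_bddAbove μ ν) (⟨B, hB⟩ : {B : Set S // MeasurableSet B})

lemma dTV_nonneg (μ ν : Measure S) [IsProbabilityMeasure μ] [IsProbabilityMeasure ν] :
    0 ≤ dTV μ ν :=
  (abs_nonneg _).trans (abs_le_dTV μ ν MeasurableSet.empty)

lemma dTV_le_of (μ ν : Measure S) {c : ℝ}
    (h : ∀ B : Set S, MeasurableSet B → |(μ B).toReal - (ν B).toReal| ≤ c) :
    dTV μ ν ≤ c :=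
  ciSup_le fun B => h B B.2

lemma dTV_le_one (μ ν : Measure S) [IsProbabilityMeasure μ] [IsProbabilityMeasure ν] :
    dTV μ ν ≤ 1 := by
  refine dTV_le_of μ ν fun B hB => ?_
  have h1 : (μ B).toReal ≤ 1 := by
    simpa using ENNReal.toReal_mono ENNReal.one_ne_top (prob_le_one (μ := μ) (s := B))
  have h2 : (ν B).toReal ≤ 1 := by
    simpa using ENNReal.toReal_mono ENNReal.one_ne_top (prob_le_one (μ := ν) (s := B))
  exact abs_le.mpr ⟨by linarith [ENNReal.toReal_nonneg (a := μ B),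
    ENNReal.toReal_nonneg (a := ν B)], by linarith [ENNReal.toReal_nonneg (a := ν B)]⟩

lemma dTV_comm (μ ν : Measure S) : dTV μ ν = dTV ν μ := by
  unfold dTV; simp_rw [abs_sub_comm]

lemma toReal_diff_le {a b : ℝ≥0∞} {c : ℝ} (h : a ≤ b + ENNReal.ofReal c)
    (hb : b ≠ ∞) (hc : 0 ≤ c) : a.toReal - b.toReal ≤ c := by
  have ha : a ≠ ∞ := by
    intro ha
    rw [ha] at h
    exact (ENNReal.add_ne_top.mpr ⟨hb, ENNReal.ofReal_ne_top⟩) (top_le_iff.mp h)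
  have := ENNReal.toReal_mono (ENNReal.add_ne_top.mpr ⟨hb, ENNReal.ofReal_ne_top⟩) h
  rw [ENNReal.toReal_add hb ENNReal.ofReal_ne_top, ENNReal.toReal_ofReal hc] at this
  linarith

lemma le_add_ofReal {a b : ℝ≥0∞} {c : ℝ} (ha : a ≠ ∞) (hb : b ≠ ∞) (hc : 0 ≤ c)
    (h : a.toReal - b.toReal ≤ c) : a ≤ b + ENNReal.ofReal c := by
  rw [← ENNReal.ofReal_toReal ha, ← ENNReal.ofReal_toReal hb,
    ← ENNReal.ofReal_add ENNReal.toReal_nonneg hc]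
  exact ENNReal.ofReal_le_ofReal (by linarith)

/-- Key one-sided estimate via the Hahn decomposition: for finite measures `μ ν`
whose set-differences are bounded by `c`, integrals of `[0,1]`-valued functions
differ by at most `c`. -/
lemma lintegral_le_lintegral_add (μ ν : Measure S) [IsFiniteMeasure μ] [IsFiniteMeasure ν]
    {c : ℝ} (hc : 0 ≤ c)
    (hTV : ∀ B : Set S, MeasurableSet B → (μ B).toReal - (ν B).toReal ≤ c)
    {f : S → ℝ≥0∞} (hf : Measurable f) (hf1 : ∀ x, f x ≤ 1) :
    ∫⁻ x, f x ∂μ ≤ (∫⁻ x, f x ∂ν) + ENNReal.ofReal c := by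
  obtain ⟨D, hD, hDν, hDμ⟩ := hahn_decomposition (μ := μ) (ν := ν)
  have hsplit : ∀ ρ : Measure S, ∫⁻ x, f x ∂ρ = ∫⁻ x in D, f x ∂ρ + ∫⁻ x in Dᶜ, f x ∂ρ :=
    fun ρ => (lintegral_add_compl f hD).symm
  have hcompl : ∫⁻ x in Dᶜ, f x ∂μ ≤ ∫⁻ x in Dᶜ, f x ∂ν := by
    refine lintegral_mono' (Measure.le_iff.mpr fun t ht => ?_) le_rfl
    rw [Measure.restrict_apply ht, Measure.restrict_apply ht]
    exact hDμ _ (ht.inter hD.compl) Set.inter_subset_right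
  have h1 : ∀ ρ : Measure S, ∫⁻ x in D, f x ∂ρ + ∫⁻ x in D, (1 - f x) ∂ρ = ρ D := by
    intro ρ
    rw [← lintegral_add_left hf]
    have hone : ∀ x, f x + (1 - f x) = 1 := fun x => add_tsub_cancel_of_le (hf1 x)
    simp_rw [hone]
    simp
  have h2 : ∫⁻ x in D, (1 - f x) ∂ν ≤ ∫⁻ x in D, (1 - f x) ∂μ := by
    refine lintegral_mono' (Measure.le_iff.mpr fun t ht => ?_) le_rfl
    rw [Measure.restrict_apply ht, Measure.restrict_apply ht]
    exact hDν _ (ht.inter hD) Set.inter_subset_right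
  have key : ∫⁻ x in D, f x ∂μ + ν D ≤ ∫⁻ x in D, f x ∂ν + μ D := by
    calc ∫⁻ x in D, f x ∂μ + ν D
        = ∫⁻ x in D, f x ∂μ + (∫⁻ x in D, f x ∂ν + ∫⁻ x in D, (1 - f x) ∂ν) := by
          rw [h1 ν]
      _ ≤ ∫⁻ x in D, f x ∂μ + (∫⁻ x in D, f x ∂ν + ∫⁻ x in D, (1 - f x) ∂μ) := by gcongr
      _ = ∫⁻ x in D, f x ∂ν + (∫⁻ x in D, f x ∂μ + ∫⁻ x in D, (1 - f x) ∂μ) := by ring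
      _ = ∫⁻ x in D, f x ∂ν + μ D := by rw [h1 μ]
  have hDc : μ D ≤ ν D + ENNReal.ofReal c :=
    le_add_ofReal (measure_ne_top μ D) (measure_ne_top ν D) hc (hTV D hD)
  have hXX : ∫⁻ x in D, f x ∂μ ≤ ∫⁻ x in D, f x ∂ν + ENNReal.ofReal c := by
    have h3 : ∫⁻ x in D, f x ∂μ + ν D ≤ (∫⁻ x in D, f x ∂ν + ENNReal.ofReal c) + ν D := by
      calc ∫⁻ x in D, f x ∂μ + ν D ≤ ∫⁻ x in D, f x ∂ν + μ D := key
        _ ≤ ∫⁻ x in D, f x ∂ν + (ν D + ENNReal.ofReal c) := by gcongr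
        _ = (∫⁻ x in D, f x ∂ν + ENNReal.ofReal c) + ν D := by ring
    exact (ENNReal.add_le_add_iff_right (measure_ne_top ν D)).mp h3
  calc ∫⁻ x, f x ∂μ = ∫⁻ x in D, f x ∂μ + ∫⁻ x in Dᶜ, f x ∂μ := hsplit μ
    _ ≤ (∫⁻ x in D, f x ∂ν + ENNReal.ofReal c) + ∫⁻ x in Dᶜ, f x ∂ν := add_le_add hXX hcompl
    _ = (∫⁻ x in D, f x ∂ν + ∫⁻ x in Dᶜ, f x ∂ν) + ENNReal.ofReal c := by ring
    _ = ∫⁻ x, f x ∂ν + ENNReal.ofReal c := by rw [← hsplit ν]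

lemma isProbabilityMeasure_bind (μ : Measure X) [IsProbabilityMeasure μ]
    (κ : Kernel X S) [IsMarkovKernel κ] : IsProbabilityMeasure (μ.bind κ) := by
  constructor
  rw [Measure.bind_apply MeasurableSet.univ κ.measurable.aemeasurable]
  simp

/-- One-step estimate: binding two nearby measures with two nearby Markov kernels. -/
lemma dTV_bind_bind (μ' μ : Measure X) [IsProbabilityMeasure μ'] [IsProbabilityMeasure μ]
    (κ' κ : Kernel X S) [IsMarkovKernel κ'] [IsMarkovKernel κ]
    {c : ℝ} (hc : 0 ≤ c) (hκ : ∀ x, dTV (κ' x) (κ x) ≤ c) :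
    dTV (μ'.bind κ') (μ.bind κ) ≤ dTV μ' μ + c := by
  have hd : 0 ≤ dTV μ' μ := dTV_nonneg μ' μ
  have main : ∀ (ρ' ρ : Measure X), IsProbabilityMeasure ρ' → IsProbabilityMeasure ρ →
      ∀ (η' η : Kernel X S), IsMarkovKernel η' → IsMarkovKernel η →
      (∀ x, dTV (η' x) (η x) ≤ c) →
      ∀ B : Set S, MeasurableSet B →
      ρ'.bind η' B ≤ ρ.bind η B + ENNReal.ofReal (dTV ρ' ρ + c) := by
    intro ρ' ρ hρ' hρ η' η hη' hη hηc B hB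
    have h0 : 0 ≤ dTV ρ' ρ := dTV_nonneg ρ' ρ
    rw [Measure.bind_apply hB η'.measurable.aemeasurable, Measure.bind_apply hB η.measurable.aemeasurable]
    have step1 : ∫⁻ x, η' x B ∂ρ' ≤ (∫⁻ x, η x B ∂ρ') + ENNReal.ofReal c := by
      have hpt : ∀ x, η' x B ≤ η x B + ENNReal.ofReal c := by
        intro x
        refine le_add_ofReal (measure_ne_top _ _) (measure_ne_top _ _) hc ?_
        exact (le_abs_self _).trans ((abs_le_dTV (η' x) (η x) hB).trans (hηc x))
      calc ∫⁻ x, η' x B ∂ρ' ≤ ∫⁻ x, (η x B + ENNReal.ofReal c) ∂ρ' := lintegral_mono hpt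
        _ = (∫⁻ x, η x B ∂ρ') + ENNReal.ofReal c := by
            rw [lintegral_add_right _ measurable_const, lintegral_const, measure_univ, mul_one]
    have step2 : ∫⁻ x, η x B ∂ρ' ≤ (∫⁻ x, η x B ∂ρ) + ENNReal.ofReal (dTV ρ' ρ) := by
      refine lintegral_le_lintegral_add ρ' ρ h0 ?_ (η.measurable_coe hB) (fun x => prob_le_one)
      exact fun B' hB' => (le_abs_self _).trans (abs_le_dTV ρ' ρ hB')
    calc ∫⁻ x, η' x B ∂ρ' ≤ (∫⁻ x, η x B ∂ρ') + ENNReal.ofReal c := step1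
      _ ≤ ((∫⁻ x, η x B ∂ρ) + ENNReal.ofReal (dTV ρ' ρ)) + ENNReal.ofReal c := by gcongr
      _ = (∫⁻ x, η x B ∂ρ) + ENNReal.ofReal (dTV ρ' ρ + c) := by
          rw [ENNReal.ofReal_add h0 hc]; ring
  refine dTV_le_of _ _ fun B hB => ?_
  haveI := isProbabilityMeasure_bind μ' κ'
  haveI := isProbabilityMeasure_bind μ κ
  have h1 := main μ' μ ‹_› ‹_› κ' κ ‹_› ‹_› hκ B hB
  have h2 := main μ μ' ‹_› ‹_› κ κ' ‹_› ‹_›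
    (fun x => (dTV_comm (κ x) (κ' x)).le.trans (hκ x)) B hB
  rw [dTV_comm μ μ'] at h2
  have ha := toReal_diff_le h1 (measure_ne_top _ _) (by linarith)
  have hb := toReal_diff_le h2 (measure_ne_top _ _) (by linarith)
  exact abs_le.mpr ⟨by linarith, by linarith⟩

lemma iterK_isProbabilityMeasure (κ : Kernel S S) [IsMarkovKernel κ] (k : ℕ) (s : S) :
    IsProbabilityMeasure (iterK (⇑κ) k s) := by
  induction k with
  | zero => exact Measure.dirac.isProbabilityMeasure
  | succ n ih => exact isProbabilityMeasure_bind _ κ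

lemma dTV_iterK (κ' κ : Kernel S S) [IsMarkovKernel κ'] [IsMarkovKernel κ]
    {c : ℝ} (hc : 0 ≤ c) (hκ : ∀ x, dTV (κ' x) (κ x) ≤ c) (k : ℕ) (s : S) :
    dTV (iterK (⇑κ') k s) (iterK (⇑κ) k s) ≤ k * c := by
  induction k with
  | zero =>
      simp only [iterK, Nat.cast_zero, zero_mul]
      exact dTV_le_of _ _ fun B hB => by simp
  | succ n ih =>
      haveI := iterK_isProbabilityMeasure κ' n s
      haveI := iterK_isProbabilityMeasure κ n s
      have h := dTV_bind_bind (iterK (⇑κ') n s) (iterK (⇑κ) n s) κ' κ hc hκ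
      have : dTV (iterK (⇑κ') (n + 1) s) (iterK (⇑κ) (n + 1) s) ≤ n * c + c := by
        simpa [iterK] using h.trans (by linarith)
      calc dTV (iterK (⇑κ') (n + 1) s) (iterK (⇑κ) (n + 1) s) ≤ n * c + c := this
        _ = (n + 1 : ℕ) * c := by push_cast; ring

lemma occ_apply_toReal {β : ℝ} (hβ0 : 0 ≤ β) (hβ1 : β ≤ 1) (P : S → Measure S) (s : S)
    (hprob : ∀ k, IsProbabilityMeasure (iterK P k s)) {t : Set S} (ht : MeasurableSet t) :
    (occ β P s t).toReal = (1 - β) * ∑' k : ℕ, β ^ k * (iterK P k s t).toReal := by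
  have hne : ∀ k : ℕ, ENNReal.ofReal (β ^ k) • iterK P k s t ≠ ∞ := by
    intro k
    rw [smul_eq_mul]
    exact ENNReal.mul_ne_top ENNReal.ofReal_ne_top (measure_ne_top _ _)
  rw [occ, Measure.smul_apply, Measure.sum_apply _ ht]
  simp_rw [Measure.smul_apply, smul_eq_mul]
  rw [ENNReal.toReal_mul, ENNReal.toReal_ofReal (by linarith),
    ENNReal.tsum_toReal_eq (by simpa [smul_eq_mul] using hne)]
  congr 1
  refine tsum_congr fun k => ?_
  rw [ENNReal.toReal_mul, ENNReal.toReal_ofReal (pow_nonneg hβ0 k)]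

lemma abs_tsum_sub_tsum_le {a b g : ℕ → ℝ} (ha : Summable a) (hb : Summable b)
    (h : ∀ k, |a k - b k| ≤ g k) (hg : Summable g) :
    |∑' k, a k - ∑' k, b k| ≤ ∑' k, g k := by
  rw [← Summable.tsum_sub ha hb]
  have habs : Summable fun k => |a k - b k| :=
    Summable.of_nonneg_of_le (fun k => abs_nonneg _) h hg
  calc |∑' k, (a k - b k)| ≤ ∑' k, |a k - b k| := by
        simpa [Real.norm_eq_abs] using
          norm_tsum_le_tsum_norm (f := fun k => a k - b k)
            (by simpa [Real.norm_eq_abs] using habs)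
    _ ≤ ∑' k, g k := Summable.tsum_le_tsum h habs hg

set_option maxHeartbeats 1000000 in
lemma dTV_occ (κ' κ : Kernel S S) [IsMarkovKernel κ'] [IsMarkovKernel κ]
    {β : ℝ} (hβ : β ∈ Set.Ioo (0 : ℝ) 1)
    {c : ℝ} (hc : 0 ≤ c) (hκ : ∀ x, dTV (κ' x) (κ x) ≤ c) (s : S) :
    dTV (occ β (⇑κ') s) (occ β (⇑κ) s) ≤ β / (1 - β) * c := by
  obtain ⟨hβ0, hβ1⟩ := hβ
  have h1β : (0 : ℝ) < 1 - β := by linarith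
  refine dTV_le_of _ _ fun t ht => ?_
  rw [occ_apply_toReal hβ0.le hβ1.le _ s (iterK_isProbabilityMeasure κ' · s) ht,
    occ_apply_toReal hβ0.le hβ1.le _ s (iterK_isProbabilityMeasure κ · s) ht]
  set a : ℕ → ℝ := fun k => β ^ k * (iterK (⇑κ') k s t).toReal with ha_def
  set b : ℕ → ℝ := fun k => β ^ k * (iterK (⇑κ) k s t).toReal with hb_def
  have hbnd : ∀ (ρ : Measure S), IsProbabilityMeasure ρ → (ρ t).toReal ≤ 1 := by
    intro ρ hρ
    simpa using ENNReal.toReal_mono ENNReal.one_ne_top (prob_le_one (μ := ρ) (s := t))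
  have hsum_geo : Summable fun k : ℕ => β ^ k := summable_geometric_of_lt_one hβ0.le hβ1
  have ha_sum : Summable a := by
    refine Summable.of_nonneg_of_le (fun k => ?_) (fun k => ?_) hsum_geo
    · exact mul_nonneg (pow_nonneg hβ0.le k) ENNReal.toReal_nonneg
    · have := hbnd _ (iterK_isProbabilityMeasure κ' k s)
      calc a k ≤ β ^ k * 1 := by
            exact mul_le_mul_of_nonneg_left this (pow_nonneg hβ0.le k)
        _ = β ^ k := mul_one _
  have hb_sum : Summable b := by
    refine Summable.of_nonneg_of_le (fun k => ?_) (fun k => ?_) hsum_geo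
    · exact mul_nonneg (pow_nonneg hβ0.le k) ENNReal.toReal_nonneg
    · have := hbnd _ (iterK_isProbabilityMeasure κ k s)
      calc b k ≤ β ^ k * 1 := by
            exact mul_le_mul_of_nonneg_left this (pow_nonneg hβ0.le k)
        _ = β ^ k := mul_one _
  have habs : ∀ k : ℕ, |a k - b k| ≤ c * ((k : ℝ) * β ^ k) := by
    intro k
    haveI := iterK_isProbabilityMeasure κ' k s
    haveI := iterK_isProbabilityMeasure κ k s
    have h1 : |(iterK (⇑κ') k s t).toReal - (iterK (⇑κ) k s t).toReal|
        ≤ (k : ℝ) * c :=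
      (abs_le_dTV _ _ ht).trans (dTV_iterK κ' κ hc hκ k s)
    calc |a k - b k|
        = β ^ k * |(iterK (⇑κ') k s t).toReal - (iterK (⇑κ) k s t).toReal| := by
          rw [ha_def, hb_def]
          rw [← mul_sub, abs_mul, abs_of_nonneg (pow_nonneg hβ0.le k)]
      _ ≤ β ^ k * ((k : ℝ) * c) := by
          exact mul_le_mul_of_nonneg_left h1 (pow_nonneg hβ0.le k)
      _ = c * ((k : ℝ) * β ^ k) := by ring
  have hβnorm : ‖β‖ < 1 := by rw [Real.norm_eq_abs, abs_of_nonneg hβ0.le]; exact hβ1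
  have hsum_kgeo : Summable fun k : ℕ => (k : ℝ) * β ^ k := by
    simpa using summable_pow_mul_geometric_of_norm_lt_one 1 hβnorm
  have hsum_bound : Summable fun k : ℕ => c * ((k : ℝ) * β ^ k) := hsum_kgeo.mul_left c
  have hkey : |∑' k, a k - ∑' k, b k| ≤ c * (β / (1 - β) ^ 2) := by
    calc |∑' k, a k - ∑' k, b k| ≤ ∑' k : ℕ, c * ((k : ℝ) * β ^ k) :=
          abs_tsum_sub_tsum_le ha_sum hb_sum habs hsum_bound
      _ = c * ∑' k : ℕ, (k : ℝ) * β ^ k := by rw [tsum_mul_left]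
      _ = c * (β / (1 - β) ^ 2) := by rw [tsum_coe_mul_geometric_of_norm_lt_one hβnorm]
  calc |(1 - β) * ∑' k, a k - (1 - β) * ∑' k, b k|
      = (1 - β) * |∑' k, a k - ∑' k, b k| := by
        rw [← mul_sub, abs_mul, abs_of_nonneg h1β.le]
    _ ≤ (1 - β) * (c * (β / (1 - β) ^ 2)) := by
        exact mul_le_mul_of_nonneg_left hkey h1β.le
    _ = β / (1 - β) * c := by field_simp

end Aux

set_option maxHeartbeats 1000000

/-- Lipschitz dependence of the discounted occupancy kernel on the policy:
`‖d^{π'} - d^{π}‖ ≤ (β/(1-β)) ‖π' - π‖` in the bounded-kernel (sup of total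
variation) norms. -/
theorem occupancy_tv_lipschitz
    {S A : Type*} [MeasurableSpace S] [MeasurableSpace A]
    (β : ℝ) (hβ : β ∈ Set.Ioo (0:ℝ) 1)
    (p : Kernel (S × A) S) [IsMarkovKernel p]
    (pol pol' : Kernel S A) [IsMarkovKernel pol] [IsMarkovKernel pol']
    (Ppol Ppol' : S → Measure S)
    (hP : ∀ s, Ppol s = (pol s).bind (fun a => p (s, a)))
    (hP' : ∀ s, Ppol' s = (pol' s).bind (fun a => p (s, a))) :
    (⨆ s : S, dTV (occ β Ppol' s) (occ β Ppol s)) ≤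
      β / (1 - β) * ⨆ s : S, dTV (pol' s) (pol s) := by
  cases isEmpty_or_nonempty S with
  | inl h =>
      rw [Real.iSup_of_isEmpty, Real.iSup_of_isEmpty, mul_zero]
  | inr h =>
      obtain ⟨hβ0, hβ1⟩ := hβ
      -- the kernels `s ↦ ∫ p(·|s,a) π(da|s)`
      set κ : Kernel S S := p ∘ₖ (Kernel.id ×ₖ pol) with hκ_def
      set κ' : Kernel S S := p ∘ₖ (Kernel.id ×ₖ pol') with hκ'_def
      have κ_apply : ∀ (q : Kernel S A) (_ : IsMarkovKernel q) (s : S),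
          (p ∘ₖ (Kernel.id ×ₖ q)) s = (q s).bind (fun a => p (s, a)) := by
        intro q hq s
        rw [Kernel.comp_apply, Kernel.prod_apply, Kernel.id_apply, Measure.dirac_prod]
        ext t ht
        rw [Measure.bind_apply ht p.measurable.aemeasurable,
          Measure.bind_apply (f := fun a => p (s, a)) ht
            (p.measurable.comp measurable_prodMk_left).aemeasurable,
          lintegral_map (p.measurable_coe ht) measurable_prodMk_left]
      have hPκ : Ppol = ⇑κ := funext fun s => (hP s).trans (κ_apply pol ‹_› s).symm
      have hPκ' : Ppol' = ⇑κ' := funext fun s => (hP' s).trans (κ_apply pol' ‹_› s).symm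
      rw [hPκ, hPκ']
      -- bound on policies
      have hpol_bdd : BddAbove (Set.range fun s : S => dTV (pol' s) (pol s)) :=
        ⟨1, by rintro x ⟨s, rfl⟩; exact dTV_le_one (pol' s) (pol s)⟩
      set c : ℝ := ⨆ s : S, dTV (pol' s) (pol s) with hc_def
      have hc0 : 0 ≤ c := by
        obtain ⟨s⟩ := h
        exact (dTV_nonneg (pol' s) (pol s)).trans (le_ciSup hpol_bdd s)
      have hκc : ∀ x : S, dTV (κ' x) (κ x) ≤ c := by
        intro x
        have hle : dTV (κ' x) (κ x) ≤ dTV (pol' x) (pol x) := by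
          refine dTV_le_of _ _ fun B hB => ?_
          have hmeas : Measurable fun a : A => p (x, a) B :=
            (p.measurable_coe hB).comp measurable_prodMk_left
          have hTV1 : ∀ B' : Set A, MeasurableSet B' →
              ((pol' x) B').toReal - ((pol x) B').toReal ≤ dTV (pol' x) (pol x) :=
            fun B' hB' => (le_abs_self _).trans (abs_le_dTV (pol' x) (pol x) hB')
          have hTV2 : ∀ B' : Set A, MeasurableSet B' →
              ((pol x) B').toReal - ((pol' x) B').toReal ≤ dTV (pol' x) (pol x) := by
            intro B' hB'
            have h := abs_le.mp (abs_le_dTV (pol' x) (pol x) hB')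
            linarith [h.1]
          have hd0 : 0 ≤ dTV (pol' x) (pol x) := dTV_nonneg _ _
          have e1 : (κ' x) B = ∫⁻ a, p (x, a) B ∂(pol' x) := by
            rw [hκ'_def, κ_apply pol' ‹_› x,
              Measure.bind_apply (f := fun a => p (x, a)) hB
                (p.measurable.comp measurable_prodMk_left).aemeasurable]
          have e2 : (κ x) B = ∫⁻ a, p (x, a) B ∂(pol x) := by
            rw [hκ_def, κ_apply pol ‹_› x,
              Measure.bind_apply (f := fun a => p (x, a)) hB
                (p.measurable.comp measurable_prodMk_left).aemeasurable]
          have i1 : (κ' x) B ≤ (κ x) B + ENNReal.ofReal (dTV (pol' x) (pol x)) := by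
            rw [e1, e2]
            exact lintegral_le_lintegral_add (pol' x) (pol x) hd0 hTV1 hmeas
              (fun a => prob_le_one)
          have i2 : (κ x) B ≤ (κ' x) B + ENNReal.ofReal (dTV (pol' x) (pol x)) := by
            rw [e1, e2]
            exact lintegral_le_lintegral_add (pol x) (pol' x) hd0 hTV2 hmeas
              (fun a => prob_le_one)
          have ha := toReal_diff_le i1 (measure_ne_top _ _) hd0
          have hb := toReal_diff_le i2 (measure_ne_top _ _) hd0
          exact abs_le.mpr ⟨by linarith, by linarith⟩
        exact hle.trans (le_ciSup hpol_bdd x)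
      exact ciSup_le fun s => dTV_occ κ' κ ⟨hβ0, hβ1⟩ hc0 hκc s
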